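/- Let R be a reduced root system in ℝ^N with positive subsystem R₊, W-invariant multiplicity function κ with κ(α) > 0, and γ = Σ_{α∈R₊} κ(α). Assume W acts irreducibly on Span(R) and let d_R = dim Span(R). For β > 0, the linear endomorphism of ℝ^N given by x ↦ x + β Σ_{α∈R₊} κ(α) (⟪α,x⟫/⟪α,α⟫) α is invertible, and its inverse maps x to x_⊥ + x_∥/(1 + βγ/d_R), where x_∥ is the orthogonal projection of x onto Span(R) and x_⊥ = x − x_∥. (This is the matrix M_β representing the action of Dunkl's intertwining operator V_β on linear functions: V_β(⟪x,y⟫) = ⟪x_∥,y_∥⟫/(1+βγ/d_R) + ⟪x_⊥,y_⊥⟫.) -/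

import Mathlib

open scoped RealInnerProductSpace BigOperators
open MeasureTheory

noncomputable section

/-- Reflection of `x` along the vector `α`. -/
def sigmaRefl {N : ℕ} (α x : EuclideanSpace ℝ (Fin N)) : EuclideanSpace ℝ (Fin N) :=
  x - (2 * ⟪α, x⟫ / ⟪α, α⟫) • α

/-- A reduced root system in `ℝ^N`, together with a choice of positivity direction `m`. -/
structure DunklRootSystem (N : ℕ) where
  R : Finset (EuclideanSpace ℝ (Fin N))
  nonzero : ∀ α ∈ R, α ≠ 0
  invariant : ∀ α ∈ R, ∀ ξ ∈ R, sigmaRefl α ξ ∈ R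
  reduced : ∀ α ∈ R, ∀ ξ ∈ R, ∀ a : ℝ, ξ = a • α → a = 1 ∨ a = -1
  m : EuclideanSpace ℝ (Fin N)
  m_transverse : ∀ α ∈ R, ⟪α, m⟫ ≠ 0

/-- The positive subsystem `R₊`. -/
def DunklRootSystem.pos {N : ℕ} (S : DunklRootSystem N) : Finset (EuclideanSpace ℝ (Fin N)) :=
  S.R.filter fun α => 0 < ⟪α, S.m⟫

/-- The reflection group `W`, as a subgroup of the group of linear isometries of `ℝ^N`. -/
def DunklRootSystem.W {N : ℕ} (S : DunklRootSystem N) :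
    Subgroup (EuclideanSpace ℝ (Fin N) ≃ₗᵢ[ℝ] EuclideanSpace ℝ (Fin N)) :=
  Subgroup.closure { g | ∃ α ∈ S.R, ⇑g = sigmaRefl α }

/-- The Dunkl operator `T_i` (with renormalized multiplicities `κ` and coupling `β`). -/
def dunklT {N : ℕ} (S : DunklRootSystem N) (κ : EuclideanSpace ℝ (Fin N) → ℝ) (β : ℝ)
    (i : Fin N) (f : EuclideanSpace ℝ (Fin N) → ℝ) (x : EuclideanSpace ℝ (Fin N)) : ℝ :=
  fderiv ℝ f x (EuclideanSpace.single i 1) +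
    (β / 2) * ∑ α ∈ S.pos, α i * κ α * ((f x - f (sigmaRefl α x)) / ⟪α, x⟫)

namespace DunklAux

variable {N : ℕ}

local notation "E" => EuclideanSpace ℝ (Fin N)

lemma inner_self_ne (α : E) (hα : α ≠ 0) : ⟪α, α⟫ ≠ 0 := by
  exact (inner_self_ne_zero (𝕜 := ℝ)).2 hα

lemma inner_sigmaRefl (α : E) (hα : α ≠ 0) (u v : E) :
    ⟪sigmaRefl α u, sigmaRefl α v⟫ = ⟪u, v⟫ := by
  have hs : ⟪α, α⟫ ≠ 0 := inner_self_ne α hα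
  simp only [sigmaRefl, inner_sub_left, inner_sub_right, real_inner_smul_left,
    real_inner_smul_right, real_inner_comm u α, real_inner_comm v α]
  set s := ⟪α, α⟫
  set a := ⟪α, u⟫
  set b := ⟪α, v⟫
  field_simp
  ring

lemma inner_sigmaRefl_right (α : E) (hα : α ≠ 0) (x : E) :
    ⟪α, sigmaRefl α x⟫ = -⟪α, x⟫ := by
  have hs : ⟪α, α⟫ ≠ 0 := inner_self_ne α hα
  simp only [sigmaRefl, inner_sub_right, real_inner_smul_right]
  set s := ⟪α, α⟫
  set a := ⟪α, x⟫
  field_simp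
  ring

lemma sigmaRefl_invol (α : E) (hα : α ≠ 0) (x : E) :
    sigmaRefl α (sigmaRefl α x) = x := by
  rw [sigmaRefl, inner_sigmaRefl_right α hα, mul_neg, neg_div, neg_smul, sub_neg_eq_add,
    sigmaRefl, sub_add_cancel]

lemma sigmaRefl_self (α : E) (hα : α ≠ 0) : sigmaRefl α α = -α := by
  have hs : ⟪α, α⟫ ≠ 0 := inner_self_ne α hα
  rw [sigmaRefl, mul_div_assoc, div_self hs, mul_one, two_smul]
  abel

end DunklAux

namespace DunklAux

variable {N : ℕ}
local notation "E" => EuclideanSpace ℝ (Fin N)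

def rk1 (α : E) : E →ₗ[ℝ] E :=
  (LinearMap.toSpanSingleton ℝ E α).comp (innerSL ℝ α).toLinearMap

lemma rk1_apply (α x : E) : rk1 α x = ⟪α, x⟫ • α := rfl

lemma rk1_neg (α : E) : rk1 (-α) = rk1 α := by
  refine LinearMap.ext fun x => ?_
  simp [rk1_apply, inner_neg_left]

def SigL (α : E) : E →ₗ[ℝ] E := LinearMap.id - (2 / ⟪α, α⟫) • rk1 α

lemma SigL_apply (α x : E) : SigL α x = sigmaRefl α x := by
  simp only [SigL, LinearMap.sub_apply, LinearMap.id_apply, LinearMap.smul_apply, rk1_apply,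
    sigmaRefl, smul_smul, div_mul_eq_mul_div]

end DunklAux

namespace DunklAux

variable {N : ℕ}
local notation "E" => EuclideanSpace ℝ (Fin N)

variable (S : DunklRootSystem N) (κ : EuclideanSpace ℝ (Fin N) → ℝ)

lemma pos_subset : S.pos ⊆ S.R := Finset.filter_subset _ _

lemma neg_mem_R {α : E} (hα : α ∈ S.R) : -α ∈ S.R := by
  have := S.invariant α hα α hα
  rwa [sigmaRefl_self α (S.nonzero α hα)] at this

def BOp : E →ₗ[ℝ] E := ∑ α ∈ S.pos, (κ α / ⟪α, α⟫) • rk1 α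

lemma BOp_apply (x : E) :
    BOp S κ x = ∑ α ∈ S.pos, (κ α * (⟪α, x⟫ / ⟪α, α⟫)) • α := by
  simp only [BOp, LinearMap.sum_apply, LinearMap.smul_apply, rk1_apply, smul_smul,
    div_mul_eq_mul_div, mul_div_assoc]

def BfullOp : E →ₗ[ℝ] E := ∑ α ∈ S.R, (κ α / ⟪α, α⟫) • rk1 α

end DunklAux

namespace DunklAux

variable {N : ℕ}
local notation "E" => EuclideanSpace ℝ (Fin N)

variable (S : DunklRootSystem N) (κ : EuclideanSpace ℝ (Fin N) → ℝ)

lemma kappa_neg (hκinv : ∀ α ∈ S.R, ∀ ξ ∈ S.R, κ (sigmaRefl α ξ) = κ ξ)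
    {α : E} (hα : α ∈ S.R) : κ (-α) = κ α := by
  have := hκinv α hα α hα
  rwa [sigmaRefl_self α (S.nonzero α hα)] at this

lemma Bfull_eq (hκinv : ∀ α ∈ S.R, ∀ ξ ∈ S.R, κ (sigmaRefl α ξ) = κ ξ) :
    BfullOp S κ = BOp S κ + BOp S κ := by
  rw [BfullOp, ← Finset.sum_filter_add_sum_filter_not S.R (fun α => 0 < ⟪α, S.m⟫)]
  congr 1
  refine Finset.sum_nbij' (fun α => -α) (fun α => -α) ?_ ?_ ?_ ?_ ?_
  · intro a ha
    rw [Finset.mem_filter] at ha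
    obtain ⟨haR, ham⟩ := ha
    have h1 : -a ∈ S.R := neg_mem_R S haR
    have h2 : ⟪a, S.m⟫ < 0 := lt_of_le_of_ne (not_lt.1 ham) (S.m_transverse a haR)
    refine Finset.mem_filter.2 ⟨h1, ?_⟩
    rw [inner_neg_left]
    linarith
  · intro a ha
    rw [DunklRootSystem.pos, Finset.mem_filter] at ha
    obtain ⟨haR, ham⟩ := ha
    refine Finset.mem_filter.2 ⟨neg_mem_R S haR, ?_⟩
    rw [inner_neg_left]
    simp only [not_lt]
    linarith
  · intro a _; simp
  · intro a _; simp
  · intro a ha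
    rw [Finset.mem_filter] at ha
    rw [kappa_neg S κ hκinv ha.1, inner_neg_neg, rk1_neg]

lemma BfullOp_apply (x : E) :
    BfullOp S κ x = ∑ ξ ∈ S.R, (κ ξ / ⟪ξ, ξ⟫ * ⟪ξ, x⟫) • ξ := by
  simp only [BfullOp, LinearMap.sum_apply, LinearMap.smul_apply, rk1_apply, smul_smul]

lemma Bfull_equivariant (hκinv : ∀ α ∈ S.R, ∀ ξ ∈ S.R, κ (sigmaRefl α ξ) = κ ξ)
    {α : E} (hα : α ∈ S.R) (x : E) :
    BfullOp S κ (sigmaRefl α x) = sigmaRefl α (BfullOp S κ x) := by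
  have hα0 : α ≠ 0 := S.nonzero α hα
  have hR : sigmaRefl α (BfullOp S κ x) = ∑ ξ ∈ S.R, (κ ξ / ⟪ξ, ξ⟫ * ⟪ξ, x⟫) • sigmaRefl α ξ := by
    rw [BfullOp_apply, ← SigL_apply, map_sum]
    refine Finset.sum_congr rfl fun ξ _ => ?_
    rw [_root_.map_smul, SigL_apply]
  rw [hR, BfullOp_apply]
  refine (Finset.sum_nbij' (fun ξ => sigmaRefl α ξ) (fun ξ => sigmaRefl α ξ)
    (fun a ha => S.invariant α hα a ha) (fun a ha => S.invariant α hα a ha)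
    (fun a _ => sigmaRefl_invol α hα0 a) (fun a _ => sigmaRefl_invol α hα0 a) ?_).symm
  intro a ha
  rw [hκinv α hα a ha, inner_sigmaRefl α hα0 a a, inner_sigmaRefl α hα0 a x]

lemma BOp_equivariant (hκinv : ∀ α ∈ S.R, ∀ ξ ∈ S.R, κ (sigmaRefl α ξ) = κ ξ)
    {α : E} (hα : α ∈ S.R) (x : E) :
    BOp S κ (sigmaRefl α x) = sigmaRefl α (BOp S κ x) := by
  have h := Bfull_equivariant S κ hκinv hα x
  rw [Bfull_eq S κ hκinv] at h
  simp only [LinearMap.add_apply, ← SigL_apply, map_add] at h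
  simp only [← SigL_apply]
  have h2 : (2 : ℝ) • BOp S κ (SigL α x) = (2 : ℝ) • SigL α (BOp S κ x) := by
    rw [two_smul, two_smul]; exact h
  exact smul_right_injective _ (two_ne_zero) h2

end DunklAux

namespace DunklAux

variable {N : ℕ}
local notation "E" => EuclideanSpace ℝ (Fin N)

variable (S : DunklRootSystem N) (κ : EuclideanSpace ℝ (Fin N) → ℝ)

lemma symm_mapsTo (g : EuclideanSpace ℝ (Fin N) ≃ₗᵢ[ℝ] EuclideanSpace ℝ (Fin N))
    (V : Submodule ℝ (EuclideanSpace ℝ (Fin N))) (h : ∀ u ∈ V, g u ∈ V) :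
    ∀ u ∈ V, g.symm u ∈ V := by
  have hle : V.map (g.toLinearEquiv : E →ₗ[ℝ] E) ≤ V := by
    rintro _ ⟨u, hu, rfl⟩
    exact h u hu
  have heq : V.map (g.toLinearEquiv : E →ₗ[ℝ] E) = V := by
    apply Submodule.eq_of_le_of_finrank_le hle
    rw [LinearEquiv.finrank_map_eq]
  intro u hu
  rw [← heq] at hu
  obtain ⟨v, hv, hvu⟩ := hu
  have : g.symm u = v := by
    have : g v = u := hvu
    rw [← this, g.symm_apply_apply]
  rwa [this]

lemma W_invariance (hκinv : ∀ α ∈ S.R, ∀ ξ ∈ S.R, κ (sigmaRefl α ξ) = κ ξ) :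
    ∀ g ∈ S.W, (∀ x, BOp S κ (g x) = g (BOp S κ x)) ∧
      (∀ u ∈ Submodule.span ℝ (S.R : Set (EuclideanSpace ℝ (Fin N))), g u ∈
        Submodule.span ℝ (S.R : Set (EuclideanSpace ℝ (Fin N)))) := by
  intro g hg
  refine Subgroup.closure_induction ?_ ?_ ?_ ?_ hg
  · rintro g ⟨α, hαR, hgα⟩
    constructor
    · intro x
      rw [show (g : E → E) = sigmaRefl α from hgα]
      exact BOp_equivariant S κ hκinv hαR x
    · intro u hu
      rw [show (g : E → E) = sigmaRefl α from hgα]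
      exact Submodule.sub_mem _ hu (Submodule.smul_mem _ _
        (Submodule.subset_span (Finset.mem_coe.2 hαR)))
  · exact ⟨fun x => rfl, fun u hu => hu⟩
  · rintro g h _ _ ⟨hgB, hgV⟩ ⟨hhB, hhV⟩
    constructor
    · intro x
      rw [LinearIsometryEquiv.coe_mul]
      simp only [Function.comp_apply]
      rw [hgB (h x), hhB x]
    · intro u hu
      rw [LinearIsometryEquiv.coe_mul]
      exact hgV _ (hhV u hu)
  · rintro g _ ⟨hgB, hgV⟩
    constructor
    · intro x
      have h1 := hgB (g.symm x)
      rw [g.apply_symm_apply] at h1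
      rw [LinearIsometryEquiv.coe_inv]
      rw [h1, g.symm_apply_apply]
    · intro u hu
      rw [LinearIsometryEquiv.coe_inv]
      exact symm_mapsTo g _ hgV u hu

lemma BOp_symmetric : (BOp S κ).IsSymmetric := by
  intro x y
  simp only [BOp_apply, sum_inner, inner_sum, real_inner_smul_left, real_inner_smul_right]
  refine Finset.sum_congr rfl fun α _ => ?_
  rw [real_inner_comm x α]
  ring

lemma BOp_mem_span (x : E) :
    BOp S κ x ∈ Submodule.span ℝ (S.R : Set (EuclideanSpace ℝ (Fin N))) := by
  rw [BOp_apply]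
  exact Submodule.sum_mem _ fun α hα => Submodule.smul_mem _ _
    (Submodule.subset_span (Finset.mem_coe.2 (pos_subset S hα)))

lemma BOp_perp (x : E)
    (hx : x ∈ (Submodule.span ℝ (S.R : Set (EuclideanSpace ℝ (Fin N))))ᗮ) :
    BOp S κ x = 0 := by
  rw [BOp_apply]
  refine Finset.sum_eq_zero fun α hα => ?_
  have hαV : α ∈ Submodule.span ℝ (S.R : Set (EuclideanSpace ℝ (Fin N))) :=
    Submodule.subset_span (Finset.mem_coe.2 (pos_subset S hα))
  have : ⟪α, x⟫ = 0 := (Submodule.mem_orthogonal _ x).1 hx α hαV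
  rw [this]
  simp

lemma trace_rk1 (α : E) : LinearMap.trace ℝ (EuclideanSpace ℝ (Fin N)) (rk1 α) = ⟪α, α⟫ := by
  rw [rk1, LinearMap.trace_comp_comm']
  have : (innerSL ℝ α).toLinearMap ∘ₗ LinearMap.toSpanSingleton ℝ E α
      = ⟪α, α⟫ • LinearMap.id := by
    refine LinearMap.ext fun c => ?_
    simp only [LinearMap.coe_comp, Function.comp_apply, LinearMap.toSpanSingleton_apply,
      ContinuousLinearMap.coe_coe, innerSL_apply_apply, LinearMap.smul_apply, LinearMap.id_apply,
      smul_eq_mul]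
    rw [real_inner_smul_right]
    ring
  rw [this, _root_.map_smul, LinearMap.trace_id]
  simp

lemma trace_BOp : LinearMap.trace ℝ (EuclideanSpace ℝ (Fin N)) (BOp S κ)
    = ∑ α ∈ S.pos, κ α := by
  rw [BOp, map_sum]
  refine Finset.sum_congr rfl fun α hα => ?_
  rw [_root_.map_smul, trace_rk1]
  have hs : ⟪α, α⟫ ≠ 0 := inner_self_ne α (S.nonzero α (pos_subset S hα))
  rw [smul_eq_mul, div_mul_cancel₀ _ hs]

end DunklAux

namespace DunklAux

variable {N : ℕ}
local notation "E" => EuclideanSpace ℝ (Fin N)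

variable (S : DunklRootSystem N) (κ : EuclideanSpace ℝ (Fin N) → ℝ)

lemma BOp_key (hκpos : ∀ α ∈ S.R, 0 < κ α)
    (hκinv : ∀ α ∈ S.R, ∀ ξ ∈ S.R, κ (sigmaRefl α ξ) = κ ξ)
    (hirr : ∀ U : Submodule ℝ (EuclideanSpace ℝ (Fin N)),
      U ≤ Submodule.span ℝ (S.R : Set (EuclideanSpace ℝ (Fin N))) →
      (∀ g ∈ S.W, ∀ u ∈ U, g u ∈ U) →
      U = ⊥ ∨ U = Submodule.span ℝ (S.R : Set (EuclideanSpace ℝ (Fin N)))) :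
    ∀ x : EuclideanSpace ℝ (Fin N),
      BOp S κ x = ((∑ α ∈ S.pos, κ α) /
        (Module.finrank ℝ (Submodule.span ℝ (S.R : Set (EuclideanSpace ℝ (Fin N)))) : ℝ)) •
        ((Submodule.orthogonalProjectionOnto (Submodule.span ℝ (S.R : Set (EuclideanSpace ℝ (Fin N)))) x : E)) := by
  set V := Submodule.span ℝ (S.R : Set (EuclideanSpace ℝ (Fin N))) with hVdef
  by_cases hpos : S.pos = ∅
  · intro x
    simp [BOp_apply, hpos]
  · obtain ⟨α₀, hα₀⟩ := Finset.nonempty_iff_ne_empty.2 hpos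
    have hα₀R : α₀ ∈ S.R := pos_subset S hα₀
    have hα₀V : α₀ ∈ V := Submodule.subset_span (Finset.mem_coe.2 hα₀R)
    haveI : Nontrivial V := by
      refine ⟨⟨α₀, hα₀V⟩, 0, ?_⟩
      intro h
      exact S.nonzero α₀ hα₀R (by simpa using congrArg Subtype.val h)
    have hmapsto : ∀ x ∈ V, BOp S κ x ∈ V := fun x _ => BOp_mem_span S κ x
    set B' : V →ₗ[ℝ] V := (BOp S κ).restrict hmapsto with hB'def
    have hsymm : B'.IsSymmetric := by
      intro u v
      have h0 := BOp_symmetric S κ (u : E) (v : E)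
      simp only [Submodule.coe_inner]
      rw [LinearMap.restrict_coe_apply, LinearMap.restrict_coe_apply]
      exact h0
    obtain ⟨μ, hev⟩ : ∃ μ : ℝ, Module.End.HasEigenvalue B' μ :=
      ⟨_, hsymm.hasEigenvalue_iSup_of_finiteDimensional⟩
    obtain ⟨v, hv⟩ := hev.exists_hasEigenvector
    set U : Submodule ℝ (EuclideanSpace ℝ (Fin N)) :=
      V ⊓ Module.End.eigenspace (BOp S κ) μ with hUdef
    have hUle : U ≤ V := inf_le_left
    have hUW : ∀ g ∈ S.W, ∀ u ∈ U, g u ∈ U := by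
      intro g hg u hu
      obtain ⟨huV, huE⟩ := Submodule.mem_inf.1 hu
      obtain ⟨hWB, hWV⟩ := W_invariance S κ hκinv g hg
      refine Submodule.mem_inf.2 ⟨hWV u huV, ?_⟩
      rw [Module.End.mem_eigenspace_iff] at huE ⊢
      rw [hWB u, huE]
      exact g.map_smul μ u
    have hvU : (v : E) ∈ U := by
      refine Submodule.mem_inf.2 ⟨v.2, ?_⟩
      rw [Module.End.mem_eigenspace_iff]
      have h1 : B' v = μ • v := hv.apply_eq_smul
      have h2 := congrArg (Subtype.val) h1
      rw [LinearMap.restrict_coe_apply] at h2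
      exact h2
    have hUV : U = V := by
      rcases hirr U hUle hUW with h | h
      · exfalso
        rw [h] at hvU
        exact hv.2 (Subtype.ext (by simpa using hvU))
      · exact h
    have hBV : ∀ y ∈ V, BOp S κ y = μ • y := by
      intro y hy
      have : y ∈ U := hUV ▸ hy
      exact Module.End.mem_eigenspace_iff.1 (Submodule.mem_inf.1 this).2
    have hfact : ∀ x : E, BOp S κ x = μ • ((Submodule.orthogonalProjectionOnto V x : E)) := by
      intro x
      have hdecomp : x = ((Submodule.orthogonalProjectionOnto V x : E))
          + (x - ((Submodule.orthogonalProjectionOnto V x : E))) := by abel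
      conv_lhs => rw [hdecomp]
      rw [map_add, hBV _ (Submodule.orthogonalProjectionOnto V x).2,
        BOp_perp S κ (x - (Submodule.orthogonalProjectionOnto V x : E)) (Submodule.sub_starProjection_mem_orthogonal x), add_zero]
    have hfact' : BOp S κ = V.subtype ∘ₗ ((μ • (LinearMap.id : V →ₗ[ℝ] V)) ∘ₗ
        ((Submodule.orthogonalProjectionOnto V : EuclideanSpace ℝ (Fin N) →L[ℝ] V) : EuclideanSpace ℝ (Fin N) →ₗ[ℝ] V)) := by
      refine LinearMap.ext fun x => ?_
      simp only [LinearMap.coe_comp, Function.comp_apply, ContinuousLinearMap.coe_coe,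
        LinearMap.smul_apply, LinearMap.id_apply, Submodule.coe_subtype,
        SetLike.val_smul]
      exact hfact x
    have htrace : (∑ α ∈ S.pos, κ α) = μ * (Module.finrank ℝ V : ℝ) := by
      have h1 := trace_BOp S κ
      rw [hfact', LinearMap.trace_comp_comm'] at h1
      have h2 : ((μ • (LinearMap.id : V →ₗ[ℝ] V)) ∘ₗ
          ((Submodule.orthogonalProjectionOnto V : EuclideanSpace ℝ (Fin N) →L[ℝ] V) : EuclideanSpace ℝ (Fin N) →ₗ[ℝ] V)) ∘ₗ V.subtype
          = μ • (LinearMap.id : V →ₗ[ℝ] V) := by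
        refine LinearMap.ext fun u => ?_
        simp only [LinearMap.coe_comp, Function.comp_apply, Submodule.coe_subtype,
          ContinuousLinearMap.coe_coe, LinearMap.smul_apply, LinearMap.id_apply]
        rw [Submodule.orthogonalProjectionOnto_mem_subspace_eq_self]
      rw [h2, _root_.map_smul, LinearMap.trace_id] at h1
      rw [← h1]
      simp [smul_eq_mul]
    have hd : (0 : ℝ) < (Module.finrank ℝ V : ℝ) := by
      have : 0 < Module.finrank ℝ V := Module.finrank_pos
      exact_mod_cast this
    have hμ : μ = (∑ α ∈ S.pos, κ α) / (Module.finrank ℝ V : ℝ) := by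
      rw [htrace]
      field_simp
    intro x
    rw [hfact x, hμ]

end DunklAux

/-- The map `x ↦ x + β Σ_{α∈R₊} κ(α)(⟪α,x⟫/⟪α,α⟫)α` is invertible and its
inverse maps `x` to `x_⊥ + x_∥/(1 + βγ/d_R)` (the matrix `M_β` of Dunkl's intertwining operator
on linear functions). -/
theorem statement1 {N : ℕ} (hN : 1 ≤ N) (S : DunklRootSystem N)
    (κ : EuclideanSpace ℝ (Fin N) → ℝ)
    (hκpos : ∀ α ∈ S.R, 0 < κ α)
    (hκinv : ∀ α ∈ S.R, ∀ ξ ∈ S.R, κ (sigmaRefl α ξ) = κ ξ)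
    (hirr : ∀ U : Submodule ℝ (EuclideanSpace ℝ (Fin N)),
      U ≤ Submodule.span ℝ (S.R : Set (EuclideanSpace ℝ (Fin N))) →
      (∀ g ∈ S.W, ∀ u ∈ U, g u ∈ U) →
      U = ⊥ ∨ U = Submodule.span ℝ (S.R : Set (EuclideanSpace ℝ (Fin N))))
    (β : ℝ) (hβ : 0 < β) :
    Function.Bijective (fun x : EuclideanSpace ℝ (Fin N) =>
        x + β • ∑ α ∈ S.pos, (κ α * (⟪α, x⟫ / ⟪α, α⟫)) • α) ∧
    ∀ x : EuclideanSpace ℝ (Fin N),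
      (fun x : EuclideanSpace ℝ (Fin N) =>
          x + β • ∑ α ∈ S.pos, (κ α * (⟪α, x⟫ / ⟪α, α⟫)) • α)
        ((x - (Submodule.orthogonalProjectionOnto (Submodule.span ℝ (S.R : Set (EuclideanSpace ℝ (Fin N)))) x :
            EuclideanSpace ℝ (Fin N))) +
          (1 + β * (∑ α ∈ S.pos, κ α) /
              (Module.finrank ℝ
                (Submodule.span ℝ (S.R : Set (EuclideanSpace ℝ (Fin N)))) : ℝ))⁻¹ •
            (Submodule.orthogonalProjectionOnto (Submodule.span ℝ (S.R : Set (EuclideanSpace ℝ (Fin N)))) x :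
              EuclideanSpace ℝ (Fin N))) = x := by
  classical
  have hkey := DunklAux.BOp_key S κ hκpos hκinv hirr
  have hfun : (fun x : EuclideanSpace ℝ (Fin N) =>
      x + β • ∑ α ∈ S.pos, (κ α * (⟪α, x⟫ / ⟪α, α⟫)) • α)
      = fun x => x + β • DunklAux.BOp S κ x := by
    funext x
    rw [DunklAux.BOp_apply]
  have hγ0 : (0:ℝ) ≤ ∑ α ∈ S.pos, κ α :=
    Finset.sum_nonneg fun α hα => (hκpos α (DunklAux.pos_subset S hα)).le
  have hd0 : (0:ℝ) ≤ (Module.finrank ℝ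
      (Submodule.span ℝ (S.R : Set (EuclideanSpace ℝ (Fin N)))) : ℝ) := Nat.cast_nonneg _
  have hc : (0:ℝ) < 1 + β * (∑ α ∈ S.pos, κ α) /
      (Module.finrank ℝ (Submodule.span ℝ (S.R : Set (EuclideanSpace ℝ (Fin N)))) : ℝ) := by
    have h1 : (0:ℝ) ≤ β * (∑ α ∈ S.pos, κ α) /
        (Module.finrank ℝ (Submodule.span ℝ (S.R : Set (EuclideanSpace ℝ (Fin N)))) : ℝ) :=
      div_nonneg (mul_nonneg hβ.le hγ0) hd0
    linarith
  have hcne := ne_of_gt hc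
  have hsec : ∀ x : EuclideanSpace ℝ (Fin N),
      (fun x : EuclideanSpace ℝ (Fin N) => x + β • DunklAux.BOp S κ x)
        ((x - (Submodule.orthogonalProjectionOnto (Submodule.span ℝ (S.R : Set (EuclideanSpace ℝ (Fin N)))) x :
            EuclideanSpace ℝ (Fin N))) +
          (1 + β * (∑ α ∈ S.pos, κ α) /
              (Module.finrank ℝ
                (Submodule.span ℝ (S.R : Set (EuclideanSpace ℝ (Fin N)))) : ℝ))⁻¹ •
            (Submodule.orthogonalProjectionOnto (Submodule.span ℝ (S.R : Set (EuclideanSpace ℝ (Fin N)))) x :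
              EuclideanSpace ℝ (Fin N))) = x := by
    intro x
    set V := Submodule.span ℝ (S.R : Set (EuclideanSpace ℝ (Fin N))) with hVdef
    set γ := ∑ α ∈ S.pos, κ α with hγdef
    set d := (Module.finrank ℝ V : ℝ) with hddef
    set p : EuclideanSpace ℝ (Fin N) := (Submodule.orthogonalProjectionOnto V x : EuclideanSpace ℝ (Fin N))
      with hpdef
    have hBsub : DunklAux.BOp S κ (x - p) = 0 :=
      DunklAux.BOp_perp S κ _ (Submodule.sub_starProjection_mem_orthogonal x)
    have hPp : ((Submodule.orthogonalProjectionOnto V p : EuclideanSpace ℝ (Fin N)))= p := by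
      rw [hpdef]
      exact congrArg Subtype.val
        (Submodule.orthogonalProjectionOnto_mem_subspace_eq_self (Submodule.orthogonalProjectionOnto V x))
    have hBp : DunklAux.BOp S κ p = (γ / d) • p := by
      rw [hkey p, hPp]
    show (x - p + (1 + β * γ / d)⁻¹ • p)
        + β • DunklAux.BOp S κ (x - p + (1 + β * γ / d)⁻¹ • p) = x
    rw [map_add, _root_.map_smul, hBsub, hBp, zero_add, smul_smul, smul_smul]
    have hco : (1 + β * γ / d)⁻¹ + β * ((1 + β * γ / d)⁻¹ * (γ / d)) = 1 := by
      calc (1 + β * γ / d)⁻¹ + β * ((1 + β * γ / d)⁻¹ * (γ / d))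
          = (1 + β * γ / d)⁻¹ * (1 + β * γ / d) := by ring
        _ = 1 := inv_mul_cancel₀ hcne
    calc x - p + (1 + β * γ / d)⁻¹ • p + (β * (1 + β * γ / d)⁻¹ * (γ / d)) • p
        = x - p + ((1 + β * γ / d)⁻¹ + β * ((1 + β * γ / d)⁻¹ * (γ / d))) • p := by
          rw [show (β * (1 + β * γ / d)⁻¹ * (γ / d)) = β * ((1 + β * γ / d)⁻¹ * (γ / d))
            from by ring, add_smul]
          abel
      _ = x := by rw [hco, one_smul, sub_add_cancel]
  constructor
  · rw [hfun]
    set A : EuclideanSpace ℝ (Fin N) →ₗ[ℝ] EuclideanSpace ℝ (Fin N) :=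
      LinearMap.id + β • DunklAux.BOp S κ with hAdef
    have hAeq : (fun x : EuclideanSpace ℝ (Fin N) => x + β • DunklAux.BOp S κ x) = ⇑A := by
      funext x
      simp [hAdef]
    rw [hAeq]
    have hsurj : Function.Surjective A := by
      intro y
      have h := hsec y
      rw [hAeq] at h
      exact ⟨_, h⟩
    exact ⟨(LinearMap.injective_iff_surjective).2 hsurj, hsurj⟩
  · intro x
    rw [hfun]
    exact hsec x
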